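/- Let u be a standard Gaussian vector in ℝ^d, let H be a d×d symmetric positive semidefinite matrix, and let Σ be a d×d symmetric positive definite matrix. Then (1/2) · E_u[(uᵀΣ^{1/2}HΣ^{1/2}u) · (Σ^{-1/2}uuᵀΣ^{-1/2} − Σ^{-1})] = H. -/

import Mathlib

open MeasureTheory ProbabilityTheory Matrix
open scoped BigOperators RealInnerProductSpace

noncomputable section

abbrev Vec (d : ℕ) := EuclideanSpace ℝ (Fin d)
abbrev Mat (d : ℕ) := Matrix (Fin d) (Fin d) ℝ

/-- View a Euclidean vector as a plain function. -/
def toPi {d : ℕ} (u : Vec d) : Fin d → ℝ := u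
/-- View a plain function as a Euclidean vector. -/
def ofPi {d : ℕ} (u : Fin d → ℝ) : Vec d := WithLp.toLp 2 u

/-- Matrix-vector multiplication on Euclidean space. -/
def mvec {d : ℕ} (A : Mat d) (u : Vec d) : Vec d := ofPi (A.mulVec (toPi u))

/-- The standard Gaussian measure N(0, I_d) on ℝ^d. -/
def gaussD (d : ℕ) : Measure (Vec d) :=
  (Measure.pi fun _ : Fin d => gaussianReal 0 1).map (MeasurableEquiv.toLp 2 (Fin d → ℝ))

/-- Frobenius norm of a matrix. -/
def matFrobNorm {m n : ℕ} (A : Matrix (Fin m) (Fin n) ℝ) : ℝ :=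
  Real.sqrt (∑ i, ∑ j, (A i j) ^ 2)

/-- Operator (spectral) norm of a matrix. -/
def matOpNorm {m n : ℕ} (A : Matrix (Fin m) (Fin n) ℝ) : ℝ :=
  ‖LinearMap.toContinuousLinearMap (Matrix.toEuclideanLin A)‖

/-- Loewner order `A ⪯ B`. -/
def loeLE {d : ℕ} (A B : Mat d) : Prop := (B - A).PosSemidef

/-- Hessian matrix of `f` at `x`. -/
def hess {d : ℕ} (f : Vec d → ℝ) (x : Vec d) : Mat d :=
  Matrix.of fun i j =>
    iteratedFDeriv ℝ 2 f x ![EuclideanSpace.single i 1, EuclideanSpace.single j 1]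

/-- Membership in `S = {Σ symmetric : ζ⁻¹ I ⪯ Σ ⪯ τ⁻¹ I}`. -/
def Smem {d : ℕ} (τ ζ : ℝ) (A : Mat d) : Prop :=
  A.IsSymm ∧ loeLE (ζ⁻¹ • 1) A ∧ loeLE A (τ⁻¹ • 1)

/-- Membership in `S' = {A symmetric : τ I ⪯ A ⪯ ζ I}`. -/
def S'mem {d : ℕ} (τ ζ : ℝ) (A : Mat d) : Prop :=
  A.IsSymm ∧ loeLE (τ • 1) A ∧ loeLE A (ζ • 1)

/-- The positive semidefinite square root (as defined in the older Mathlib). -/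
def Matrix.PosSemidef.sqrt {n : Type*} [Fintype n] [DecidableEq n] {𝕜 : Type*} [RCLike 𝕜] [PartialOrder 𝕜] [StarOrderedRing 𝕜]
    {A : Matrix n n 𝕜} (hA : A.PosSemidef) : Matrix n n 𝕜 :=
  hA.1.eigenvectorUnitary.1 * diagonal ((↑) ∘ (√·) ∘ hA.1.eigenvalues) *
    (star hA.1.eigenvectorUnitary : Matrix n n 𝕜)

/-- The regularized reparameterized objective `Q_α(μ, Σ)`. -/
def Qa {d : ℕ} (f : Vec d → ℝ) (α : ℝ) (μ : Vec d) (S : Mat d) (hS : S.PosSemidef) : ℝ :=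
  (∫ u, f (μ + α • mvec hS.sqrt u) ∂ gaussD d) - α ^ 2 / 2 * Real.log S.det

section Aux
open Real


def pdf1 (x : ℝ) : ℝ := gaussianPDFReal 0 1 x

lemma pdf1_eq (x : ℝ) : pdf1 x = (Real.sqrt (2 * π))⁻¹ * rexp (-x ^ 2 / 2) := by
  simp [pdf1, gaussianPDFReal]

lemma pdf1_nonneg (x : ℝ) : 0 ≤ pdf1 x := gaussianPDFReal_nonneg 0 1 x

lemma pdf1_even (x : ℝ) : pdf1 (-x) = pdf1 x := by simp [pdf1_eq]

lemma gauss1_eq : gaussianReal 0 1 =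
    (volume : Measure ℝ).withDensity fun x => ((pdf1 x).toNNReal : ENNReal) := by
  rw [gaussianReal_of_var_ne_zero 0 one_ne_zero]
  rfl

lemma meas_pdf1 : Measurable fun x => (pdf1 x).toNNReal :=
  (measurable_gaussianPDFReal 0 1).real_toNNReal

lemma integral_gauss1 (g : ℝ → ℝ) :
    ∫ x, g x ∂(gaussianReal 0 1) = ∫ x, pdf1 x * g x := by
  rw [gauss1_eq, integral_withDensity_eq_integral_smul meas_pdf1 g]
  congr 1 with x
  simp [NNReal.smul_def, Real.coe_toNNReal _ (pdf1_nonneg x)]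

lemma integrable_pdf1_pow (n : ℕ) : Integrable (fun x : ℝ => pdf1 x * x ^ n) := by
  have h : Integrable (fun x : ℝ => x ^ (n : ℝ) * rexp (-(1/2) * x ^ 2)) :=
    integrable_rpow_mul_exp_neg_mul_sq (by norm_num) (by
      have : (0:ℝ) ≤ n := Nat.cast_nonneg n
      linarith)
  have h2 : Integrable (fun x : ℝ => (Real.sqrt (2 * π))⁻¹ * (x ^ n * rexp (-(1/2) * x ^ 2))) := by
    refine Integrable.const_mul ?_ _
    simpa [Real.rpow_natCast] using h
  refine h2.congr ?_
  filter_upwards with x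
  rw [pdf1_eq]
  ring_nf

lemma integrable_pow_gauss1 (n : ℕ) : Integrable (fun x : ℝ => x ^ n) (gaussianReal 0 1) := by
  rw [gauss1_eq, integrable_withDensity_iff_integrable_smul meas_pdf1]
  refine (integrable_pdf1_pow n).congr ?_
  filter_upwards with x
  simp [NNReal.smul_def, Real.coe_toNNReal _ (pdf1_nonneg x)]

lemma gmom_odd (n : ℕ) (hn : Odd n) : ∫ x, x ^ n ∂(gaussianReal 0 1) = 0 := by
  rw [integral_gauss1]
  have h := integral_neg_eq_self (fun x : ℝ => pdf1 x * x ^ n) volume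
  have h2 : ∫ x : ℝ, pdf1 (-x) * (-x) ^ n = - ∫ x : ℝ, pdf1 x * x ^ n := by
    rw [← integral_neg]
    congr 1 with x
    rw [pdf1_even, hn.neg_pow]
    ring
  rw [h2] at h
  linarith

lemma gmom_even (n : ℕ) (hn : Even n) :
    ∫ x, x ^ n ∂(gaussianReal 0 1) =
      (Real.sqrt (2 * π))⁻¹ * 2 *
        ((1/2 : ℝ) ^ (-(((n : ℝ) + 1) / 2)) * (1/2) * Gamma (((n : ℝ) + 1) / 2)) := by
  rw [integral_gauss1]
  have h1 : (fun x : ℝ => pdf1 x * x ^ n) = fun x : ℝ => (fun y => pdf1 y * y ^ n) |x| := by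
    funext x
    simp only [pdf1_eq, sq_abs, hn.pow_abs]
  rw [h1]
  rw [integral_comp_abs (f := fun y => pdf1 y * y ^ n)]
  have h2 : ∀ x ∈ Set.Ioi (0:ℝ), pdf1 x * x ^ n =
      (Real.sqrt (2 * π))⁻¹ * (x ^ (n : ℝ) * rexp (-(1/2) * x ^ (((2:ℕ)):ℝ))) := by
    intro x hx
    rw [pdf1_eq, Real.rpow_natCast, Real.rpow_natCast]
    ring_nf
  rw [setIntegral_congr_fun measurableSet_Ioi h2, integral_const_mul,
    integral_rpow_mul_exp_neg_mul_rpow (by norm_num)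
      (by have := Nat.cast_nonneg (α := ℝ) n; linarith) (by norm_num)]
  push_cast
  ring_nf

/-- moments: m 0 = 1, m 1 = 0, m 2 = 1, m 3 = 0, m 4 = 3 -/
def gmom (n : ℕ) : ℝ := ∫ x, x ^ n ∂(gaussianReal 0 1)

lemma sqrt2pi_eq : Real.sqrt (2 * π) = Real.sqrt 2 * Real.sqrt π := Real.sqrt_mul (by norm_num) _

lemma rpow_half_2 : (2:ℝ) ^ ((1:ℝ)/2) = Real.sqrt 2 := by
  rw [Real.sqrt_eq_rpow]

lemma gmom0 : gmom 0 = 1 := by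
  simp [gmom]

lemma gmom1 : gmom 1 = 0 := gmom_odd 1 (by norm_num)

lemma gmom3 : gmom 3 = 0 := gmom_odd 3 ⟨1, by norm_num⟩

lemma gamma32 : Gamma ((3:ℝ)/2) = Real.sqrt π / 2 := by
  have : ((3:ℝ)/2) = 1/2 + 1 := by norm_num
  rw [this, Real.Gamma_add_one (by norm_num), Real.Gamma_one_half_eq]
  ring

lemma gamma52 : Gamma ((5:ℝ)/2) = 3 * Real.sqrt π / 4 := by
  have : ((5:ℝ)/2) = 3/2 + 1 := by norm_num
  rw [this, Real.Gamma_add_one (by norm_num), gamma32]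
  ring

lemma half_rpow_neg (r : ℝ) : (1/2 : ℝ) ^ (-r) = 2 ^ r := by
  rw [show (1/2:ℝ) = 2⁻¹ by norm_num, ← Real.rpow_neg_one (2:ℝ),
    ← Real.rpow_mul (by norm_num)]
  norm_num

lemma two_rpow_32 : (2:ℝ) ^ ((3:ℝ)/2) = 2 * Real.sqrt 2 := by
  have : ((3:ℝ)/2) = 1 + 1/2 := by norm_num
  rw [this, Real.rpow_add (by norm_num), Real.rpow_one, rpow_half_2]

lemma two_rpow_52 : (2:ℝ) ^ ((5:ℝ)/2) = 4 * Real.sqrt 2 := by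
  have : ((5:ℝ)/2) = 2 + 1/2 := by norm_num
  rw [this, Real.rpow_add (by norm_num), rpow_half_2]
  norm_num [Real.rpow_natCast]

lemma gmom2 : gmom 2 = 1 := by
  have h := gmom_even 2 (by norm_num)
  rw [gmom, h]
  have e1 : (-((((2:ℕ):ℝ) + 1) / 2)) = -((3:ℝ)/2) := by norm_num
  have e2 : ((((2:ℕ):ℝ)) + 1) / 2 = (3:ℝ)/2 := by norm_num
  rw [e1, e2, half_rpow_neg, two_rpow_32, gamma32, sqrt2pi_eq]
  have h2 : Real.sqrt 2 * Real.sqrt 2 = 2 := Real.mul_self_sqrt (by norm_num)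
  have hπ : Real.sqrt π * Real.sqrt π = π := Real.mul_self_sqrt Real.pi_pos.le
  have h2p : Real.sqrt 2 > 0 := Real.sqrt_pos.mpr (by norm_num)
  have hπp : Real.sqrt π > 0 := Real.sqrt_pos.mpr Real.pi_pos
  field_simp

lemma gmom4 : gmom 4 = 3 := by
  have h := gmom_even 4 ⟨2, by norm_num⟩
  rw [gmom, h]
  have e1 : (-((((4:ℕ):ℝ) + 1) / 2)) = -((5:ℝ)/2) := by norm_num
  have e2 : ((((4:ℕ):ℝ)) + 1) / 2 = (5:ℝ)/2 := by norm_num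
  rw [e1, e2, half_rpow_neg, two_rpow_52, gamma52, sqrt2pi_eq]
  have h2 : Real.sqrt 2 * Real.sqrt 2 = 2 := Real.mul_self_sqrt (by norm_num)
  have hπ : Real.sqrt π * Real.sqrt π = π := Real.mul_self_sqrt Real.pi_pos.le
  have h2p : Real.sqrt 2 > 0 := Real.sqrt_pos.mpr (by norm_num)
  have hπp : Real.sqrt π > 0 := Real.sqrt_pos.mpr Real.pi_pos
  field_simp



/-- type synonym carrying the gaussian measure as `volume` -/
def RG : Type := ℝ

instance : MeasurableSpace RG := (inferInstance : MeasurableSpace ℝ)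
instance : MeasureSpace RG := ⟨gaussianReal 0 1⟩
instance : IsProbabilityMeasure (volume : Measure RG) :=
  (inferInstance : IsProbabilityMeasure (gaussianReal 0 1))
instance : SigmaFinite (volume : Measure RG) := inferInstance

variable {d : ℕ}

def P (d : ℕ) : Measure (Fin d → ℝ) := Measure.pi fun _ => gaussianReal 0 1

lemma P_eq : P d = (volume : Measure (Fin d → RG)) := rfl

lemma integral_P_prod (f : Fin d → ℝ → ℝ) :
    ∫ x, ∏ i, f i (x i) ∂(P d) = ∏ i, ∫ x, f i x ∂(gaussianReal 0 1) :=
  MeasureTheory.integral_fintype_prod_eq_prod (ι := Fin d) (E := fun _ => ℝ) f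

lemma integrable_P_prod (f : Fin d → ℝ → ℝ)
    (hf : ∀ i, Integrable (f i) (gaussianReal 0 1)) :
    Integrable (fun x : Fin d → ℝ => ∏ i, f i (x i)) (P d) :=
  MeasureTheory.Integrable.fintype_prod (ι := Fin d) (E := ℝ) hf

variable {d : ℕ}

def dl (a b : Fin d) : ℝ := if a = b then 1 else 0

def c2 (k l : Fin d) : Fin d → ℕ := fun i => (if i = k then 1 else 0) + (if i = l then 1 else 0)

def c4 (k l m n : Fin d) : Fin d → ℕ := fun i =>
  (if i = k then 1 else 0) + (if i = l then 1 else 0) +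
  ((if i = m then 1 else 0) + (if i = n then 1 else 0))

lemma prod_pow_single (x : Fin d → ℝ) (k : Fin d) :
    ∏ i, x i ^ (if i = k then 1 else 0) = x k := by
  have h : ∀ i : Fin d, x i ^ (if i = k then 1 else 0) = (if i = k then x i else 1) := by
    intro i; split <;> simp
  simp only [h]
  simpa using Finset.prod_ite_eq' Finset.univ k (fun i => x i)

lemma mono2 (x : Fin d → ℝ) (k l : Fin d) :
    x k * x l = ∏ i, x i ^ (c2 k l i) := by
  simp only [c2, pow_add, Finset.prod_mul_distrib, prod_pow_single]

lemma mono4 (x : Fin d → ℝ) (k l m n : Fin d) :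
    x k * x l * (x m * x n) = ∏ i, x i ^ (c4 k l m n i) := by
  simp only [c4, pow_add, Finset.prod_mul_distrib, prod_pow_single]

lemma prod_gmom_single (c : Fin d → ℕ) (a : Fin d) (h : ∀ i, i ≠ a → c i = 0) :
    ∏ i, gmom (c i) = gmom (c a) := by
  rw [← Finset.prod_subset (Finset.subset_univ {a})
    (fun i _ hi => by rw [h i (by simpa using hi), gmom0])]
  simp

lemma prod_gmom_pair (c : Fin d → ℕ) (a b : Fin d) (hab : a ≠ b)
    (h : ∀ i, i ≠ a → i ≠ b → c i = 0) :
    ∏ i, gmom (c i) = gmom (c a) * gmom (c b) := by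
  rw [← Finset.prod_subset (Finset.subset_univ {a, b})
    (fun i _ hi => by
      simp only [Finset.mem_insert, Finset.mem_singleton, not_or] at hi
      rw [h i hi.1 hi.2, gmom0])]
  rw [Finset.prod_pair hab]

lemma prod_gmom_zero (c : Fin d → ℕ) (a : Fin d) (h : c a = 1) :
    ∏ i, gmom (c i) = 0 :=
  Finset.prod_eq_zero (Finset.mem_univ a) (by rw [h, gmom1])

lemma integrable_mono2 (k l : Fin d) :
    Integrable (fun x : Fin d → ℝ => x k * x l) (P d) := by
  have := integrable_P_prod (fun i t => t ^ (c2 k l i)) (fun i => integrable_pow_gauss1 _)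
  refine this.congr ?_
  filter_upwards with x
  rw [← mono2]

lemma integrable_mono4 (k l m n : Fin d) :
    Integrable (fun x : Fin d → ℝ => x k * x l * (x m * x n)) (P d) := by
  have := integrable_P_prod (fun i t => t ^ (c4 k l m n i)) (fun i => integrable_pow_gauss1 _)
  refine this.congr ?_
  filter_upwards with x
  rw [← mono4]

lemma moment2 (k l : Fin d) : ∫ x, x k * x l ∂(P d) = dl k l := by
  have h : (fun x : Fin d → ℝ => x k * x l)
      = fun x => ∏ i, (x i) ^ (c2 k l i) := by
    funext x; exact mono2 x k l
  rw [h, integral_P_prod (fun i t => t ^ (c2 k l i))]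
  rcases eq_or_ne k l with hkl | hkl
  · subst l
    rw [show (∏ i, ∫ x : ℝ, x ^ c2 k k i ∂(gaussianReal 0 1)) = ∏ i, gmom (c2 k k i) from rfl,
      prod_gmom_single _ k (fun i hi => by simp [c2, hi])]
    simp [c2, dl, gmom2]
  · rw [show (∏ i, ∫ x : ℝ, x ^ c2 k l i ∂(gaussianReal 0 1)) = ∏ i, gmom (c2 k l i) from rfl,
      prod_gmom_zero _ k (by simp [c2, hkl])]
    simp [dl, hkl]

lemma moment4 (k l m n : Fin d) :
    ∫ x, x k * x l * (x m * x n) ∂(P d)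
      = dl k l * dl m n + dl k m * dl l n + dl k n * dl l m := by
  have h : (fun x : Fin d → ℝ => x k * x l * (x m * x n))
      = fun x => ∏ i, (x i) ^ (c4 k l m n i) := by
    funext x; exact mono4 x k l m n
  rw [h, integral_P_prod (fun i t => t ^ (c4 k l m n i)),
    show (∏ i, ∫ x : ℝ, x ^ c4 k l m n i ∂(gaussianReal 0 1)) = ∏ i, gmom (c4 k l m n i) from rfl]
  rcases eq_or_ne k l with hkl | hkl
  · subst l
    rcases eq_or_ne k m with hkm | hkm
    · subst m
      rcases eq_or_ne k n with hkn | hkn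
      · subst n
        rw [prod_gmom_single _ k (fun i hi => by simp [c4, hi])]
        simp [c4, dl, gmom4]
        norm_num
      · rw [prod_gmom_zero _ n (by simp [c4, hkn, Ne.symm hkn])]
        simp [dl, Ne.symm hkn, hkn]
    · rcases eq_or_ne m n with hmn | hmn
      · subst n
        rw [prod_gmom_pair _ k m hkm (fun i h1 h2 => by simp [c4, h1, h2])]
        simp [c4, dl, hkm, Ne.symm hkm, gmom2]
      · rw [prod_gmom_zero _ m (by simp [c4, Ne.symm hkm, hmn])]
        simp [dl, hkm, hmn, Ne.symm hkm]
  · rcases eq_or_ne k m with hkm | hkm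
    · subst m
      rcases eq_or_ne l n with hln | hln
      · subst n
        rw [prod_gmom_pair _ k l hkl (fun i h1 h2 => by simp [c4, h1, h2])]
        simp [c4, dl, hkl, Ne.symm hkl, gmom2]
      · rw [prod_gmom_zero _ l (by simp [c4, Ne.symm hkl, hln])]
        simp [dl, hkl, hln, Ne.symm hkl]
    · rcases eq_or_ne k n with hkn | hkn
      · subst n
        rcases eq_or_ne l m with hlm | hlm
        · subst m
          rw [prod_gmom_pair _ k l hkl (fun i h1 h2 => by simp [c4, h1, h2])]
          simp [c4, dl, hkl, Ne.symm hkl, gmom2]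
        · rw [prod_gmom_zero _ l (by simp [c4, Ne.symm hkl, hlm])]
          simp [dl, hkl, hlm, Ne.symm hkl, Ne.symm hkm]
      · rw [prod_gmom_zero _ k (by simp [c4, hkl, hkm, hkn])]
        simp [dl, hkl, hkm, hkn]

end Aux
open Real
lemma sqrt_herm' {d : ℕ} (S : Matrix (Fin d) (Fin d) ℝ) (hS : S.PosSemidef) : (hS.sqrt).IsHermitian := by
  unfold IsHermitian Matrix.PosSemidef.sqrt
  simp [conjTranspose_mul, Matrix.star_eq_conjTranspose, diagonal_conjTranspose, mul_assoc]
lemma sqrt_mul_self' {d : ℕ} (S : Matrix (Fin d) (Fin d) ℝ) (hS : S.PosSemidef) : hS.sqrt * hS.sqrt = S := by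
  conv_rhs => rw [hS.1.spectral_theorem]
  have hU : (star hS.1.eigenvectorUnitary : Matrix (Fin d) (Fin d) ℝ) * hS.1.eigenvectorUnitary.1 = 1 :=
    Unitary.coe_star_mul_self _
  simp only [Matrix.PosSemidef.sqrt, Unitary.conjStarAlgAut_apply, mul_assoc]
  rw [← mul_assoc _ hS.1.eigenvectorUnitary.1, hU, one_mul, ← mul_assoc (diagonal _), diagonal_mul_diagonal]
  simp [Real.mul_self_sqrt, hS.eigenvalues_nonneg]
section Main
variable {d : ℕ} (H S : Mat d)

-- matrix helper facts
lemma sqrt_symm (hS : S.PosDef) : (hS.posSemidef.sqrt)ᵀ = hS.posSemidef.sqrt := by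
  have h := sqrt_herm' S hS.posSemidef
  exact (by simpa [Matrix.conjTranspose] using h : hS.posSemidef.sqrt.IsSymm)

lemma sqrt_det_ne (hS : S.PosDef) : (hS.posSemidef.sqrt).det ≠ 0 := by
  intro h
  have h2 : (hS.posSemidef.sqrt * hS.posSemidef.sqrt).det = S.det := by
    rw [sqrt_mul_self' S hS.posSemidef]
  rw [Matrix.det_mul, h, mul_zero] at h2
  exact (ne_of_gt hS.det_pos) h2.symm

lemma inv_symm (hS : S.PosDef) : ((hS.posSemidef.sqrt)⁻¹)ᵀ = (hS.posSemidef.sqrt)⁻¹ := by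
  rw [Matrix.transpose_nonsing_inv, sqrt_symm S hS]

lemma BB_eq (hS : S.PosDef) : (hS.posSemidef.sqrt)⁻¹ * (hS.posSemidef.sqrt)⁻¹ = S⁻¹ := by
  rw [← Matrix.mul_inv_rev, sqrt_mul_self' S hS.posSemidef]

lemma BAB_eq (hS : S.PosDef) :
    (hS.posSemidef.sqrt)⁻¹ * (hS.posSemidef.sqrt * H * hS.posSemidef.sqrt) *
      (hS.posSemidef.sqrt)⁻¹ = H := by
  have hu : IsUnit (hS.posSemidef.sqrt).det := (Ne.isUnit (sqrt_det_ne S hS))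
  rw [show hS.posSemidef.sqrt * H * hS.posSemidef.sqrt =
      hS.posSemidef.sqrt * (H * hS.posSemidef.sqrt) by rw [mul_assoc]]
  rw [← mul_assoc, ← mul_assoc, Matrix.nonsing_inv_mul _ hu, one_mul, mul_assoc,
    Matrix.mul_nonsing_inv _ hu, mul_one]

end Main

/-- `(1/2)·E_u[(uᵀΣ^{1/2}HΣ^{1/2}u)(Σ^{-1/2}uuᵀΣ^{-1/2} − Σ^{-1})] = H`. -/
theorem stmt5 {d : ℕ} (hd : 1 ≤ d) (H S : Mat d)
    (hHsymm : H.IsSymm) (hH : H.PosSemidef) (hSsymm : S.IsSymm) (hS : S.PosDef) :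
    (Matrix.of fun i j => (1 / 2) * ∫ u,
        ⟪u, mvec (hS.posSemidef.sqrt * H * hS.posSemidef.sqrt) u⟫ *
          (((hS.posSemidef.sqrt)⁻¹.mulVec (toPi u)) i *
             ((hS.posSemidef.sqrt)⁻¹.mulVec (toPi u)) j - S⁻¹ i j) ∂ gaussD d)
      = H := by
  set s : Mat d := hS.posSemidef.sqrt with hs
  set A : Mat d := s * H * s with hA
  set B : Mat d := s⁻¹ with hB
  apply Matrix.ext
  intro i j
  rw [Matrix.of_apply]
  -- Step 1: move to coordinates
  have step1 : (∫ u, ⟪u, mvec A u⟫ * ((B.mulVec (toPi u)) i * (B.mulVec (toPi u)) j - S⁻¹ i j)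
        ∂ gaussD d)
      = ∫ x, (∑ k, x k * ∑ l, A k l * x l) *
          ((∑ m, B i m * x m) * (∑ n, B j n * x n) - S⁻¹ i j) ∂ P d := by
    rw [gaussD, MeasureTheory.integral_map_equiv]
    apply integral_congr_ae
    filter_upwards with x
    simp [mvec, toPi, ofPi, PiLp.inner_apply, RCLike.inner_apply, starRingEnd_apply,
      Matrix.mulVec, dotProduct]
    exact Or.inl (Finset.sum_congr rfl fun k _ => mul_comm _ _)
  rw [step1]
  set c : ℝ := S⁻¹ i j with hc
  have expand : ∀ x : Fin d → ℝ,
      (∑ k, x k * ∑ l, A k l * x l) * ((∑ m, B i m * x m) * (∑ n, B j n * x n) - c)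
      = (∑ p : (Fin d × Fin d) × Fin d × Fin d,
          (A p.1.1 p.1.2 * (B i p.2.1 * B j p.2.2)) * (x p.1.1 * x p.1.2 * (x p.2.1 * x p.2.2)))
        - (∑ q : Fin d × Fin d, (A q.1 q.2 * c) * (x q.1 * x q.2)) := by
    intro x
    have h1 : (∑ k, x k * ∑ l, A k l * x l)
        = ∑ q : Fin d × Fin d, A q.1 q.2 * (x q.1 * x q.2) := by
      rw [Fintype.sum_prod_type]
      refine Finset.sum_congr rfl fun k _ => ?_
      rw [Finset.mul_sum]
      exact Finset.sum_congr rfl fun l _ => by ring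
    have h2 : (∑ m, B i m * x m) * (∑ n, B j n * x n)
        = ∑ r : Fin d × Fin d, (B i r.1 * B j r.2) * (x r.1 * x r.2) := by
      rw [Fintype.sum_prod_type, Finset.sum_mul_sum]
      refine Finset.sum_congr rfl fun m _ => Finset.sum_congr rfl fun n _ => by ring
    rw [mul_sub, h1, h2, Finset.sum_mul_sum]
    congr 1
    · conv_rhs => rw [Fintype.sum_prod_type]
      refine Finset.sum_congr rfl fun q _ => Finset.sum_congr rfl fun r _ => by ring
    · rw [Finset.sum_mul]
      exact Finset.sum_congr rfl fun q _ => by ring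
  have hi1 : Integrable (fun x : Fin d → ℝ => ∑ p : (Fin d × Fin d) × Fin d × Fin d,
      (A p.1.1 p.1.2 * (B i p.2.1 * B j p.2.2)) * (x p.1.1 * x p.1.2 * (x p.2.1 * x p.2.2)))
      (P d) :=
    integrable_finset_sum _ fun p _ => (integrable_mono4 p.1.1 p.1.2 p.2.1 p.2.2).const_mul _
  have hi2 : Integrable (fun x : Fin d → ℝ =>
      ∑ q : Fin d × Fin d, (A q.1 q.2 * c) * (x q.1 * x q.2)) (P d) :=
    integrable_finset_sum _ fun q _ => (integrable_mono2 q.1 q.2).const_mul _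
  rw [integral_congr_ae (ae_of_all _ expand), integral_sub hi1 hi2,
    integral_finset_sum _ (fun p _ => (integrable_mono4 p.1.1 p.1.2 p.2.1 p.2.2).const_mul _),
    integral_finset_sum _ (fun q _ => (integrable_mono2 q.1 q.2).const_mul _)]
  simp only [integral_const_mul, moment4, moment2]
  have E2 : ∑ q : Fin d × Fin d, A q.1 q.2 * c * dl q.1 q.2 = (∑ a, A a a) * c := by
    rw [Fintype.sum_prod_type, Finset.sum_mul]
    simp [dl, mul_ite, mul_one, mul_zero, Finset.sum_ite_eq]
  have E1 : ∑ p : (Fin d × Fin d) × Fin d × Fin d,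
      A p.1.1 p.1.2 * (B i p.2.1 * B j p.2.2) *
        (dl p.1.1 p.1.2 * dl p.2.1 p.2.2 + dl p.1.1 p.2.1 * dl p.1.2 p.2.2 +
          dl p.1.1 p.2.2 * dl p.1.2 p.2.1)
      = (∑ a, A a a) * (∑ u, B i u * B j u)
        + ((∑ a, ∑ b, A a b * (B i a * B j b)) + (∑ a, ∑ b, A a b * (B i b * B j a))) := by
    simp only [Fintype.sum_prod_type, mul_add, Finset.sum_add_distrib]
    have sum_dl : ∀ (f : Fin d → ℝ) (u : Fin d), ∑ v, f v * dl u v = f u := by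
      intro f u
      simp [dl, mul_ite, mul_one, mul_zero, Finset.sum_ite_eq]
    have hT1 : ∑ x : Fin d, ∑ x1 : Fin d, ∑ x2 : Fin d, ∑ x3 : Fin d,
        A x x1 * (B i x2 * B j x3) * (dl x x1 * dl x2 x3)
        = (∑ a, A a a) * ∑ u, B i u * B j u := by
      have h1 : ∀ x x1 : Fin d, ∑ x2 : Fin d, ∑ x3 : Fin d,
          A x x1 * (B i x2 * B j x3) * (dl x x1 * dl x2 x3)
          = (A x x1 * dl x x1) * ∑ u, B i u * B j u := by
        intro x x1
        rw [Finset.mul_sum]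
        refine Finset.sum_congr rfl fun x2 _ => ?_
        have h2 : ∑ x3 : Fin d, A x x1 * (B i x2 * B j x3) * (dl x x1 * dl x2 x3)
            = ∑ x3 : Fin d, (A x x1 * (B i x2 * B j x3) * dl x x1) * dl x2 x3 :=
          Finset.sum_congr rfl fun x3 _ => by ring
        rw [h2, sum_dl (fun v => A x x1 * (B i x2 * B j v) * dl x x1) x2]
        ring
      rw [Finset.sum_mul]
      refine Finset.sum_congr rfl fun x _ => ?_
      have h3 := sum_dl (fun v => A x v * (∑ u, B i u * B j u)) x
      rw [← h3]
      refine Finset.sum_congr rfl fun x1 _ => ?_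
      rw [h1 x x1]
      ring
    have hT2 : ∑ x : Fin d, ∑ x1 : Fin d, ∑ x2 : Fin d, ∑ x3 : Fin d,
        A x x1 * (B i x2 * B j x3) * (dl x x2 * dl x1 x3)
        = ∑ a, ∑ b, A a b * (B i a * B j b) := by
      refine Finset.sum_congr rfl fun x _ => Finset.sum_congr rfl fun x1 _ => ?_
      have h1 : ∀ x2 : Fin d, ∑ x3 : Fin d, A x x1 * (B i x2 * B j x3) * (dl x x2 * dl x1 x3)
          = (A x x1 * (B i x2 * B j x1)) * dl x x2 := by
        intro x2
        have h2 : ∑ x3 : Fin d, A x x1 * (B i x2 * B j x3) * (dl x x2 * dl x1 x3)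
            = ∑ x3 : Fin d, (A x x1 * (B i x2 * B j x3) * dl x x2) * dl x1 x3 :=
          Finset.sum_congr rfl fun x3 _ => by ring
        rw [h2, sum_dl (fun v => A x x1 * (B i x2 * B j v) * dl x x2) x1]
      rw [Finset.sum_congr rfl fun x2 _ => h1 x2,
        sum_dl (fun v => A x x1 * (B i v * B j x1)) x]
    have hT3 : ∑ x : Fin d, ∑ x1 : Fin d, ∑ x2 : Fin d, ∑ x3 : Fin d,
        A x x1 * (B i x2 * B j x3) * (dl x x3 * dl x1 x2)
        = ∑ a, ∑ b, A a b * (B i b * B j a) := by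
      refine Finset.sum_congr rfl fun x _ => Finset.sum_congr rfl fun x1 _ => ?_
      have h1 : ∀ x2 : Fin d, ∑ x3 : Fin d, A x x1 * (B i x2 * B j x3) * (dl x x3 * dl x1 x2)
          = (A x x1 * (B i x2 * B j x)) * dl x1 x2 := by
        intro x2
        have h2 : ∑ x3 : Fin d, A x x1 * (B i x2 * B j x3) * (dl x x3 * dl x1 x2)
            = ∑ x3 : Fin d, (A x x1 * (B i x2 * B j x3) * dl x1 x2) * dl x x3 :=
          Finset.sum_congr rfl fun x3 _ => by ring
        rw [h2, sum_dl (fun v => A x x1 * (B i x2 * B j v) * dl x1 x2) x]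
      rw [Finset.sum_congr rfl fun x2 _ => h1 x2,
        sum_dl (fun v => A x x1 * (B i v * B j x)) x1]
    rw [hT1, hT2, hT3]
    ring
  rw [E1, E2]
  have hBsymE : Bᵀ = B := inv_symm S hS
  have hBsym : ∀ a b : Fin d, B a b = B b a := by
    intro a b
    conv_rhs => rw [← hBsymE, Matrix.transpose_apply]
  have hAsym : ∀ a b : Fin d, A a b = A b a := by
    have hA' : Aᵀ = A := by
      rw [hA, Matrix.transpose_mul, Matrix.transpose_mul, sqrt_symm S hS, hHsymm.eq, mul_assoc]
    intro a b
    conv_rhs => rw [← hA', Matrix.transpose_apply]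
  have hBB : ∑ u, B i u * B j u = c := by
    rw [hc, ← BB_eq S hS, Matrix.mul_apply]
    exact Finset.sum_congr rfl fun u _ => by rw [hBsym j u]
  have hZ1 : ∑ a, ∑ b, A a b * (B i a * B j b) = H i j := by
    calc ∑ a, ∑ b, A a b * (B i a * B j b)
        = ∑ b, ∑ a, A a b * (B i a * B j b) := Finset.sum_comm
      _ = ∑ b, (∑ a, B i a * A a b) * B b j := by
          refine Finset.sum_congr rfl fun b _ => ?_
          rw [Finset.sum_mul]
          refine Finset.sum_congr rfl fun a _ => ?_
          rw [hBsym j b]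
          ring
      _ = (B * A * B) i j := by
          rw [Matrix.mul_apply]
          exact Finset.sum_congr rfl fun b _ => by rw [Matrix.mul_apply]
      _ = H i j := by rw [BAB_eq H S hS]
  have hZ2 : ∑ a, ∑ b, A a b * (B i b * B j a) = H i j := by
    rw [Finset.sum_comm]
    rw [show (∑ b, ∑ a, A a b * (B i b * B j a)) = ∑ b, ∑ a, A b a * (B i b * B j a) from
      Finset.sum_congr rfl fun b _ => Finset.sum_congr rfl fun a _ => by rw [hAsym a b]]
    exact hZ1
  rw [hBB, hZ1, hZ2]
  ring
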